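/- Let G be a graph of order n ≥ 4 in which every vertex of degree 2 has both neighbors of degree n−2, every vertex of degree n−2 has all neighbors of degree 2, every vertex has degree 2 or n−2, and G is connected and contains a cycle. Then G is isomorphic to the complete bipartite graph K_{2,n−2}. -/
import Mathlib


/-- Number of k-nearly independent vertex subsets: subsets whose induced subgraph has exactly k edges. -/
def sigmaK {V : Type*} [Fintype V] [DecidableEq V] (G : SimpleGraph V) [DecidableRel G.Adj] (k : ℕ) : ℕ :=
  (Finset.univ.filter fun s : Finset V =>
    (s.sym2.filter fun e => e ∈ G.edgeSet).card = k).card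

/-- A graph is good if for every edge uv, N[u] ∪ N[v] = V(G). -/
def IsGoodGraph {V : Type*} (G : SimpleGraph V) : Prop :=
  ∀ u v : V, G.Adj u v →
    (insert u (G.neighborSet u)) ∪ (insert v (G.neighborSet v)) = Set.univ

theorem stmt18 {V : Type*} [Fintype V] [DecidableEq V] (G : SimpleGraph V) [DecidableRel G.Adj]
    (n : ℕ) (hcard : Fintype.card V = n) (hn : 4 ≤ n)
    (hconn : G.Connected) (hcyc : ¬ G.IsAcyclic)
    (h2 : ∀ v : V, G.degree v = 2 → ∀ u : V, G.Adj v u → G.degree u = n - 2)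
    (hn2 : ∀ v : V, G.degree v = n - 2 → ∀ u : V, G.Adj v u → G.degree u = 2)
    (hall : ∀ v : V, G.degree v = 2 ∨ G.degree v = n - 2) :
    Nonempty (G ≃g completeBipartiteGraph (Fin 2) (Fin (n - 2))) := by
  classical
  have hVpos : 0 < Fintype.card V := by omega
  have hVne : Nonempty V := Fintype.card_pos_iff.mp hVpos
  -- there is a vertex of degree n - 2
  obtain ⟨v₀, hv₀⟩ : ∃ v, G.degree v = n - 2 := by
    by_contra h
    push_neg at h
    have hv2 : ∀ v, G.degree v = 2 := fun v => (hall v).resolve_right (h v)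
    obtain ⟨v⟩ := hVne
    obtain ⟨u, hu⟩ : ∃ u, G.Adj v u :=
      G.degree_pos_iff_exists_adj v |>.mp (by rw [hv2 v]; norm_num)
    exact h u (h2 v (hv2 v) u hu)
  set B := G.neighborFinset v₀ with hB
  have hBcard : B.card = n - 2 := hv₀
  have hv₀B : v₀ ∉ B := G.notMem_neighborFinset_self v₀
  -- the unique vertex outside the closed neighborhood of v₀
  have hTcard : (Finset.univ \ insert v₀ B).card = 1 := by
    rw [Finset.card_sdiff_of_subset (Finset.subset_univ _), Finset.card_insert_of_notMem hv₀B,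
      Finset.card_univ, hcard, hBcard]
    omega
  obtain ⟨w, hw⟩ := Finset.card_eq_one.mp hTcard
  have hwmem : w ∈ Finset.univ \ insert v₀ B := by rw [hw]; exact Finset.mem_singleton_self w
  have hwv₀ : w ≠ v₀ := by
    intro h; have := Finset.mem_sdiff.mp hwmem
    exact this.2 (by rw [h]; exact Finset.mem_insert_self _ _)
  have hwB : w ∉ B := fun h => (Finset.mem_sdiff.mp hwmem).2 (Finset.mem_insert_of_mem h)
  have huniq : ∀ u : V, u ≠ v₀ → u ∉ B → u = w := by
    intro u h1 h2'
    have : u ∈ Finset.univ \ insert v₀ B := by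
      rw [Finset.mem_sdiff]
      exact ⟨Finset.mem_univ _, fun h => by
        rcases Finset.mem_insert.mp h with h | h
        · exact h1 h
        · exact h2' h⟩
    rw [hw] at this; exact Finset.mem_singleton.mp this
  -- degrees of vertices in B
  have hdB : ∀ u ∈ B, G.degree u = 2 := fun u hu =>
    hn2 v₀ hv₀ u ((G.mem_neighborFinset _ _).mp hu)
  -- degree of w
  have hdw : G.degree w = n - 2 := by
    rcases hall w with h | h
    · obtain ⟨u, hu⟩ : ∃ u, G.Adj w u :=
        G.degree_pos_iff_exists_adj w |>.mp (by rw [h]; norm_num)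
      have huv₀ : u ≠ v₀ := by
        rintro rfl
        exact hwB ((G.mem_neighborFinset _ _).mpr hu.symm)
      have huB : u ∈ B := by
        by_contra hc
        exact hu.ne' (huniq u huv₀ hc)
      have h22 : n - 2 = 2 := by rw [← h2 w h u hu, hdB u huB]
      rw [h22]; exact h
    · exact h
  -- w's neighborhood is exactly B
  have hNw : G.neighborFinset w = B := by
    apply Finset.eq_of_subset_of_card_le
    · intro u hu
      have hadj : G.Adj w u := (G.mem_neighborFinset _ _).mp hu
      by_contra hc
      have huv₀ : u ≠ v₀ := by
        rintro rfl
        exact hwB ((G.mem_neighborFinset _ _).mpr hadj.symm)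
      exact hadj.ne' (huniq u huv₀ hc)
    · rw [hBcard]; rw [← hdw]; rfl
  have hadjw : ∀ u ∈ B, G.Adj w u := fun u hu => by
    rw [← G.mem_neighborFinset, hNw]; exact hu
  -- neighborhoods of vertices in B
  have hNu : ∀ u ∈ B, G.neighborFinset u = {v₀, w} := by
    intro u hu
    symm
    apply Finset.eq_of_subset_of_card_le
    · intro x hx
      rcases Finset.mem_insert.mp hx with h | h
      · subst h; exact (G.mem_neighborFinset _ _).mpr ((G.mem_neighborFinset _ _).mp hu).symm
      · rw [Finset.mem_singleton.mp h]
        exact (G.mem_neighborFinset _ _).mpr (hadjw u hu).symm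
    · have : G.degree u = 2 := hdB u hu
      have hc2 : ({v₀, w} : Finset V).card = 2 := by
        rw [Finset.card_insert_of_notMem (by simp [hwv₀.symm]), Finset.card_singleton]
      rw [hc2]
      show G.degree u ≤ 2
      rw [this]
  -- the "left" side
  set S : Set V := {v₀, w} with hS
  have hmemS : ∀ x, x ∈ S ↔ x = v₀ ∨ x = w := by intro x; simp [hS]
  have hnotS : ∀ x, x ∉ S ↔ x ∈ B := by
    intro x
    constructor
    · intro hx
      rw [hmemS] at hx
      push_neg at hx
      by_contra hc
      exact hx.2 (huniq x hx.1 hc)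
    · intro hx hc
      rcases (hmemS x).mp hc with h | h
      · subst h; exact hv₀B hx
      · subst h; exact hwB hx
  -- adjacency characterization
  have key : ∀ x y, G.Adj x y ↔ ((x ∈ S ∧ y ∉ S) ∨ (x ∉ S ∧ y ∈ S)) := by
    intro x y
    by_cases hx : x ∈ S
    · rcases (hmemS x).mp hx with rfl | rfl
      · constructor
        · intro h
          left
          refine ⟨hx, (hnotS y).mpr ((G.mem_neighborFinset _ _).mpr h)⟩
        · rintro (⟨-, h⟩ | ⟨h, -⟩)
          · exact (G.mem_neighborFinset _ _).mp ((hnotS y).mp h)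
          · exact absurd hx h
      · constructor
        · intro h
          left
          refine ⟨hx, (hnotS y).mpr ?_⟩
          rw [← hNw]; exact (G.mem_neighborFinset _ _).mpr h
        · rintro (⟨-, h⟩ | ⟨h, -⟩)
          · exact hadjw y ((hnotS y).mp h)
          · exact absurd hx h
    · have hxB : x ∈ B := (hnotS x).mp hx
      constructor
      · intro h
        right
        refine ⟨hx, ?_⟩
        have : y ∈ G.neighborFinset x := (G.mem_neighborFinset _ _).mpr h
        rw [hNu x hxB] at this
        rw [hmemS]
        simpa using this
      · rintro (⟨h, -⟩ | ⟨-, h⟩)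
        · exact absurd h hx
        · have : y ∈ G.neighborFinset x := by
            rw [hNu x hxB]
            rcases (hmemS y).mp h with rfl | rfl <;> simp
          exact (G.mem_neighborFinset _ _).mp this
  -- cardinalities
  have hScard : Fintype.card ↥S = 2 := by
    rw [← Set.toFinset_card]
    simp [hS, Set.toFinset_insert, Set.toFinset_singleton,
      Finset.card_insert_of_notMem (by simp [hwv₀.symm] : v₀ ∉ ({w} : Finset V))]
  have hSccard : Fintype.card ↥Sᶜ = n - 2 := by
    rw [Fintype.card_compl_set, hScard, hcard]
  let e₁ : ↥S ≃ Fin 2 := Fintype.equivFinOfCardEq hScard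
  let e₂ : ↥Sᶜ ≃ Fin (n - 2) := Fintype.equivFinOfCardEq hSccard
  let e : V ≃ Fin 2 ⊕ Fin (n - 2) := (Equiv.Set.sumCompl S).symm.trans (e₁.sumCongr e₂)
  refine ⟨⟨e, ?_⟩⟩
  intro a b
  show (completeBipartiteGraph (Fin 2) (Fin (n - 2))).Adj (e a) (e b) ↔ G.Adj a b
  rw [key a b]
  by_cases ha : a ∈ S <;> by_cases hb : b ∈ S <;>
    simp [e, Equiv.Set.sumCompl_symm_apply_of_mem, Equiv.Set.sumCompl_symm_apply_of_notMem,
      ha, hb]
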